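/- A commutative ring R is Noetherian if and only if the space Idl(R) of all ideals of R, endowed with the coarse lower topology, is a Noetherian topological space. -/

import Mathlib

/-- The coarse lower topology on the set of ideals of a commutative ring. -/
def coarseLowerTopology (R : Type*) [CommRing R] : TopologicalSpace (Ideal R) :=
  TopologicalSpace.generateFrom {U : Set (Ideal R) | ∃ a : Ideal R, U = {i : Ideal R | a ≤ i}ᶜ}

/-- `R` is Noetherian iff `Idl(R)` with the coarse lower topology is a Noetherian space. -/
theorem isNoetherianRing_iff_noetherianSpace (R : Type*) [CommRing R] :
    letI := coarseLowerTopology R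
    IsNoetherianRing R ↔ TopologicalSpace.NoetherianSpace (Ideal R) := by
  letI := coarseLowerTopology R
  constructor
  · intro h
    have hwf : WellFoundedGT (Ideal R) := by
      rw [IsNoetherianRing, isNoetherian_iff'] at h
      exact h
    have hsfc := CompleteLattice.WellFoundedGT.isSupFiniteCompact (Ideal R)
    rw [TopologicalSpace.noetherianSpace_iff_isCompact]
    intro s
    rw [isCompact_iff_ultrafilter_le_nhds]
    intro f hf
    by_contra hc
    push_neg at hc
    -- for each i ∈ s, find a subbasic open containing i that is not in f
    have key : ∀ i ∈ s, ∃ a : Ideal R, ¬ a ≤ i ∧ Set.Ici a ∈ f := by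
      intro i hi
      have hnot := hc i hi
      erw [TopologicalSpace.nhds_generateFrom, le_iInf₂_iff] at hnot
      push_neg at hnot
      obtain ⟨U, ⟨hU1, a, rfl⟩, hU3⟩ := hnot
      rw [Filter.le_principal_iff] at hU3
      refine ⟨a, hU1, ?_⟩
      have h2 := Ultrafilter.compl_mem_iff_notMem (f := f) (s := {i : Ideal R | a ≤ i}ᶜ)
      rw [compl_compl] at h2
      exact h2.mpr hU3
    -- the set of ideals a with Ici a ∈ f
    set T : Set (Ideal R) := {a : Ideal R | Set.Ici a ∈ f} with hT
    obtain ⟨t, htT, htsup⟩ := hsfc T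
    have hIci : Set.Ici (t.sup id) ∈ f := by
      have heq : Set.Ici (t.sup id) = ⋂ a ∈ t, Set.Ici (a : Ideal R) := by
        ext i
        simp [Finset.sup_le_iff]
      rw [heq]
      exact (Filter.biInter_mem t.finite_toSet).mpr fun a ha => htT ha
    have hs : s ∈ f := Filter.le_principal_iff.mp hf
    obtain ⟨i, hi1, hi2⟩ := Filter.nonempty_of_mem (f.inter_mem hs hIci)
    obtain ⟨a, ha1, ha2⟩ := key i hi1
    exact ha1 (le_trans (le_trans (le_sSup ha2) (le_of_eq htsup)) hi2)
  · intro h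
    have hwc : WellFoundedLT (TopologicalSpace.Closeds (Ideal R)) := inferInstance
    rw [IsNoetherianRing, isNoetherian_iff']
    constructor
    have hclosed : ∀ a : Ideal R, IsClosed {i : Ideal R | a ≤ i} := by
      intro a
      rw [← isOpen_compl_iff]
      exact TopologicalSpace.isOpen_generateFrom_of_mem ⟨a, rfl⟩
    let F : Ideal R → TopologicalSpace.Closeds (Ideal R) :=
      fun a => ⟨{i : Ideal R | a ≤ i}, hclosed a⟩
    have hanti : ∀ a b : Ideal R, a < b → F b < F a := by
      intro a b hab
      refine lt_of_le_of_ne (fun i hi => le_trans hab.le hi) (fun he => ?_)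
      have hm : a ∈ (F b : Set (Ideal R)) := by rw [he]; exact le_refl a
      exact absurd (show b ≤ a from hm) hab.not_ge
    exact Subrelation.wf (fun {a b} hab => hanti b a hab) (InvImage.wf F hwc.wf)
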